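/- Let k ≥ 2 and let G be a C_{2k}-free graph on n vertices. Then the set S of vertices of degree at least (1 − 1/(2k))·n has size at most k − 1. -/

import Mathlib

open Finset SimpleGraph

namespace C2kAux

variable {V : Type*} {G : SimpleGraph V} {a b : ℕ → V}

def walkAux (G : SimpleGraph V) (a b : ℕ → V) (hadj : ∀ i j, G.Adj (a i) (b j)) :
    (m : ℕ) → G.Walk (a m) (a 0)
  | 0 => SimpleGraph.Walk.nil
  | m + 1 => SimpleGraph.Walk.cons (hadj (m+1) m)
      (SimpleGraph.Walk.cons (hadj m m).symm (walkAux G a b hadj m))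

lemma walkAux_length (hadj : ∀ i j, G.Adj (a i) (b j)) (m : ℕ) :
    (walkAux G a b hadj m).length = 2 * m := by
  induction m with
  | zero => simp [walkAux]
  | succ m ih => simp [walkAux, ih]; omega

lemma mem_walkAux_support (hadj : ∀ i j, G.Adj (a i) (b j)) (m : ℕ) {x : V} :
    x ∈ (walkAux G a b hadj m).support ↔ (∃ i ≤ m, x = a i) ∨ (∃ j < m, x = b j) := by
  induction m with
  | zero =>
    simp only [walkAux, SimpleGraph.Walk.support_nil, List.mem_singleton]
    constructor
    · rintro rfl; exact Or.inl ⟨0, le_refl 0, rfl⟩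
    · rintro (⟨i, hi, rfl⟩ | ⟨j, hj, _⟩)
      · have : i = 0 := by omega
        rw [this]
      · omega
  | succ m ih =>
    simp only [walkAux, SimpleGraph.Walk.support_cons, List.mem_cons, ih]
    constructor
    · rintro (rfl | rfl | ⟨i, hi, rfl⟩ | ⟨j, hj, rfl⟩)
      · exact Or.inl ⟨m+1, le_refl _, rfl⟩
      · exact Or.inr ⟨m, by omega, rfl⟩
      · exact Or.inl ⟨i, by omega, rfl⟩
      · exact Or.inr ⟨j, by omega, rfl⟩
    · rintro (⟨i, hi, rfl⟩ | ⟨j, hj, rfl⟩)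
      · rcases Nat.eq_or_lt_of_le hi with h | h
        · exact Or.inl (by rw [h])
        · exact Or.inr (Or.inr (Or.inl ⟨i, by omega, rfl⟩))
      · rcases Nat.eq_or_lt_of_le (Nat.lt_succ_iff.mp hj) with h | h
        · exact Or.inr (Or.inl (by rw [h]))
        · exact Or.inr (Or.inr (Or.inr ⟨j, h, rfl⟩))

lemma walkAux_support_nodup (hadj : ∀ i j, G.Adj (a i) (b j)) {k : ℕ}
    (ha : ∀ i j, i < k → j < k → a i = a j → i = j)
    (hb : ∀ i j, i < k → j < k → b i = b j → i = j)
    (hab : ∀ i j, i < k → j < k → a i ≠ b j) :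
    ∀ m, m < k → ((walkAux G a b hadj m).support).Nodup := by
  intro m hm
  induction m with
  | zero => simp [walkAux]
  | succ m ih =>
    simp only [walkAux, SimpleGraph.Walk.support_cons, List.nodup_cons, List.mem_cons,
      mem_walkAux_support]
    refine ⟨?_, ?_, ih (by omega)⟩
    · rintro (h | ⟨i, hi, h⟩ | ⟨j, hj, h⟩)
      · exact hab (m+1) m hm (by omega) h
      · have := ha (m+1) i hm (by omega) h; omega
      · exact hab (m+1) j hm (by omega) h
    · rintro (⟨i, hi, h⟩ | ⟨j, hj, h⟩)
      · exact hab i m (by omega) (by omega) h.symm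
      · have := hb m j (by omega) (by omega) h; omega

lemma exists_cycle (G : SimpleGraph V) (a b : ℕ → V) (k : ℕ) (hk : 2 ≤ k)
    (hadj : ∀ i j, G.Adj (a i) (b j))
    (ha : ∀ i j, i < k → j < k → a i = a j → i = j)
    (hb : ∀ i j, i < k → j < k → b i = b j → i = j)
    (hab : ∀ i j, i < k → j < k → a i ≠ b j) :
    ∃ c : G.Walk (a 0) (a 0), c.IsCycle ∧ c.length = 2 * k := by
  set m := k - 1 with hm
  have hmk : m < k := by omega
  have hm1 : 1 ≤ m := by omega
  set w := walkAux G a b hadj m with hw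
  refine ⟨SimpleGraph.Walk.cons (hadj 0 m) (SimpleGraph.Walk.cons (hadj m m).symm w), ?_, ?_⟩
  · rw [SimpleGraph.Walk.cons_isCycle_iff]
    constructor
    · rw [SimpleGraph.Walk.isPath_def, SimpleGraph.Walk.support_cons, List.nodup_cons]
      refine ⟨?_, walkAux_support_nodup hadj ha hb hab m hmk⟩
      rw [mem_walkAux_support]
      rintro (⟨i, hi, h⟩ | ⟨j, hj, h⟩)
      · exact hab i m (by omega) hmk h.symm
      · have := hb m j hmk (by omega) h; omega
    · rw [SimpleGraph.Walk.edges_cons, List.mem_cons]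
      rintro (h | h)
      · rw [Sym2.eq_iff] at h
        rcases h with ⟨h1, h2⟩ | ⟨h1, h2⟩
        · exact hab 0 m (by omega) hmk h1
        · have := ha 0 m (by omega) hmk h1; omega
      · have := SimpleGraph.Walk.snd_mem_support_of_mem_edges _ h
        rw [mem_walkAux_support] at this
        rcases this with ⟨i, hi, h'⟩ | ⟨j, hj, h'⟩
        · exact hab i m (by omega) hmk h'.symm
        · have := hb m j hmk (by omega) h'; omega
  · rw [SimpleGraph.Walk.length_cons, SimpleGraph.Walk.length_cons, hw, walkAux_length]
    omega

end C2kAux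

/-- Let `k ≥ 2`, `n ≥ 4k`, and let `G` be an `n`-vertex graph with no cycle of length
`2k`. Then the set of vertices of degree at least `(1 − 1/(2k))·n` has size at most
`k − 1`. -/
theorem stmt_10 {V : Type*} [Fintype V] [DecidableEq V]
    (G : SimpleGraph V) [DecidableRel G.Adj] (k : ℕ) (hk : 2 ≤ k)
    (hn : 4 * k ≤ Fintype.card V)
    (hfree : ∀ (w : V) (c : G.Walk w w), c.IsCycle → c.length ≠ 2 * k) :
    (Finset.univ.filter fun v : V =>
        (1 - 1 / (2 * (k : ℝ))) * (Fintype.card V : ℝ) ≤ (G.degree v : ℝ)).card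
      ≤ k - 1 := by
  classical
  by_contra hcon
  set n := Fintype.card V with hnV
  set S := (Finset.univ.filter fun v : V =>
      (1 - 1 / (2 * (k : ℝ))) * (n : ℝ) ≤ (G.degree v : ℝ)) with hSdef
  have hkpos : 0 < k := by omega
  have hkR : (0 : ℝ) < (k : ℝ) := by exact_mod_cast hkpos
  have hS : k ≤ S.card := by omega
  obtain ⟨T, hTS, hT⟩ := Finset.exists_subset_card_eq hS
  set ea := T.equivFinOfCardEq hT with hea
  set a : ℕ → V := fun i => ((ea.symm ⟨i % k, Nat.mod_lt i hkpos⟩ : T) : V) with ha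
  have haS : ∀ i, a i ∈ S := fun i => hTS (ea.symm ⟨i % k, Nat.mod_lt i hkpos⟩).2
  have haInj : ∀ i j, i < k → j < k → a i = a j → i = j := by
    intro i j hi hj h
    have h1 := ea.symm.injective (Subtype.coe_injective h)
    have h2 : i % k = j % k := by
      simpa [Fin.ext_iff] using h1
    rwa [Nat.mod_eq_of_lt hi, Nat.mod_eq_of_lt hj] at h2
  have hdegS : ∀ v ∈ S, (1 - 1 / (2 * (k : ℝ))) * (n : ℝ) ≤ (G.degree v : ℝ) :=
    fun v hv => (Finset.mem_filter.mp hv).2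
  set M := (Finset.univ.filter fun x => ∃ i, i < k ∧ ¬ G.Adj (a i) x) with hM
  have hsub : M ⊆ (Finset.range k).biUnion
      (fun i => Finset.univ.filter (fun x => ¬ G.Adj (a i) x)) := by
    intro x hx
    obtain ⟨-, i, hi, h⟩ := Finset.mem_filter.mp hx
    exact Finset.mem_biUnion.mpr ⟨i, Finset.mem_range.mpr hi,
      Finset.mem_filter.mpr ⟨Finset.mem_univ _, h⟩⟩
  have h1 : M.card ≤ ∑ i ∈ Finset.range k,
      (Finset.univ.filter fun x => ¬ G.Adj (a i) x).card :=
    le_trans (Finset.card_le_card hsub) Finset.card_biUnion_le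
  have h2 : ∀ i, ((Finset.univ.filter fun x => ¬ G.Adj (a i) x).card : ℝ)
      ≤ (n : ℝ) / (2 * k) := by
    intro i
    have hdle : G.degree (a i) ≤ n := by
      rw [← SimpleGraph.card_neighborFinset_eq_degree]
      exact Finset.card_le_univ _
    have hfc : (Finset.univ.filter fun x => ¬ G.Adj (a i) x).card = n - G.degree (a i) := by
      rw [Finset.filter_not, Finset.card_sdiff_of_subset (Finset.filter_subset _ _),
        ← SimpleGraph.neighborFinset_eq_filter, SimpleGraph.card_neighborFinset_eq_degree,
        Finset.card_univ]
    have hd := hdegS (a i) (haS i)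
    have hring : (1 - 1 / (2 * (k : ℝ))) * (n : ℝ) = (n : ℝ) - (n : ℝ) / (2 * k) := by
      field_simp
    rw [hfc, Nat.cast_sub hdle]
    rw [hring] at hd
    linarith
  have h3 : (M.card : ℝ) ≤ (n : ℝ) / 2 := by
    have hc1 : (M.card : ℝ) ≤ ∑ i ∈ Finset.range k,
        ((Finset.univ.filter fun x => ¬ G.Adj (a i) x).card : ℝ) := by
      exact_mod_cast h1
    have hc2 : ∑ i ∈ Finset.range k,
        ((Finset.univ.filter fun x => ¬ G.Adj (a i) x).card : ℝ)
        ≤ ∑ _i ∈ Finset.range k, (n : ℝ) / (2 * k) :=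
      Finset.sum_le_sum (fun i _ => h2 i)
    have hc3 : ∑ _i ∈ Finset.range k, (n : ℝ) / (2 * k) = (n : ℝ) / 2 := by
      rw [Finset.sum_const, Finset.card_range, nsmul_eq_mul]
      field_simp
    linarith
  set N := Finset.univ \ M with hN
  have hNadj : ∀ x ∈ N, ∀ i, G.Adj (a i) x := by
    intro x hx i
    have hxM : x ∉ M := (Finset.mem_sdiff.mp hx).2
    have : ¬ ∃ j, j < k ∧ ¬ G.Adj (a j) x := fun h =>
      hxM (Finset.mem_filter.mpr ⟨Finset.mem_univ _, h⟩)
    push_neg at this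
    have hmod : a i = a (i % k) := by
      have : i % k % k = i % k := Nat.mod_eq_of_lt (Nat.mod_lt i hkpos)
      simp only [ha, this]
    rw [hmod]
    exact this (i % k) (Nat.mod_lt i hkpos)
  have hMn : M.card ≤ n := Finset.card_le_univ _
  have hNcard : k ≤ N.card := by
    have hNc : N.card = n - M.card := by
      rw [hN, Finset.card_sdiff_of_subset (Finset.subset_univ _), Finset.card_univ, hnV]
    have hcast : (N.card : ℝ) = (n : ℝ) - M.card := by
      rw [hNc, Nat.cast_sub hMn]
    have hnR : (4 * k : ℝ) ≤ (n : ℝ) := by exact_mod_cast hn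
    have : (k : ℝ) ≤ (N.card : ℝ) := by
      rw [hcast]; linarith
    exact_mod_cast this
  obtain ⟨U, hUN, hU⟩ := Finset.exists_subset_card_eq hNcard
  set eb := U.equivFinOfCardEq hU with heb
  set b : ℕ → V := fun j => ((eb.symm ⟨j % k, Nat.mod_lt j hkpos⟩ : U) : V) with hb
  have hbN : ∀ j, b j ∈ N := fun j => hUN (eb.symm ⟨j % k, Nat.mod_lt j hkpos⟩).2
  have hbInj : ∀ i j, i < k → j < k → b i = b j → i = j := by
    intro i j hi hj h
    have h1 := eb.symm.injective (Subtype.coe_injective h)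
    have h2 : i % k = j % k := by
      simpa [Fin.ext_iff] using h1
    rwa [Nat.mod_eq_of_lt hi, Nat.mod_eq_of_lt hj] at h2
  have hadj : ∀ i j, G.Adj (a i) (b j) := fun i j => hNadj (b j) (hbN j) i
  have hab : ∀ i j, i < k → j < k → a i ≠ b j := fun i j _ _ => (hadj i j).ne
  obtain ⟨c, hc, hlen⟩ := C2kAux.exists_cycle G a b k hk hadj haInj hbInj hab
  exact hfree (a 0) c hc hlen
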